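/- Let b(z) = (1+z)/2 and let φ : D → D be analytic. If the composition operator C_φ is bounded on H(b), then either the non-tangential limit φ(1) belongs to D or φ(1) = 1. -/

import Mathlib

open Complex MeasureTheory Set Filter

noncomputable section

attribute [local instance] Classical.propDecidable

/-- The open unit disk in `ℂ`. -/
def unitDisk : Set ℂ := Metric.ball 0 1

/-- The unit circle in `ℂ`. -/
def unitCircle : Set ℂ := Metric.sphere 0 1

/-- Membership in `H^∞`: analytic and bounded on the unit disk. -/
def MemHinf (f : ℂ → ℂ) : Prop :=
  DifferentiableOn ℂ f unitDisk ∧ ∃ C : ℝ, ∀ z ∈ unitDisk, ‖f z‖ ≤ C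

/-- Membership in the closed unit ball of `H^∞`. -/
def MemBallHinf (f : ℂ → ℂ) : Prop :=
  DifferentiableOn ℂ f unitDisk ∧ ∀ z ∈ unitDisk, ‖f z‖ ≤ 1

/-- `f` agrees on the closed unit disk with a rational function without poles there. -/
def IsRationalOnDisk (f : ℂ → ℂ) : Prop :=
  ∃ P Q : Polynomial ℂ, ∀ z ∈ Metric.closedBall (0:ℂ) 1,
    Q.eval z ≠ 0 ∧ f z = P.eval z / Q.eval z

/-- `f` is a finite Blaschke product (multiplicities are encoded by repetition). -/
def IsFiniteBlaschke (f : ℂ → ℂ) : Prop :=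
  ∃ (γ : ℂ) (k : ℕ) (lam : Fin k → ℂ), ‖γ‖ = 1 ∧ (∀ i, lam i ∈ unitDisk) ∧
    ∀ z ∈ unitDisk, f z = γ * ∏ i, (z - lam i) / (1 - (starRingEnd ℂ) (lam i) * z)

/-- The `k`-th Taylor coefficient of `f` at the origin. -/
def taylorCoeff (f : ℂ → ℂ) (k : ℕ) : ℂ := iteratedDeriv k f 0 / k.factorial

/-- Membership in the Hardy space `H²` (square-summable Taylor coefficients). -/
def MemH2 (f : ℂ → ℂ) : Prop :=
  DifferentiableOn ℂ f unitDisk ∧ Summable fun k => ‖taylorCoeff f k‖ ^ 2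

/-- The squared `H²` norm. -/
def h2NormSq (f : ℂ → ℂ) : ℝ := ∑' k, ‖taylorCoeff f k‖ ^ 2

/-- The `H²` inner product. -/
def h2Inner (f g : ℂ → ℂ) : ℂ :=
  ∑' k, (starRingEnd ℂ) (taylorCoeff f k) * taylorCoeff g k

/-- The polynomial `a₁(z) = ∏ⱼ (z − ξⱼ)^{mⱼ}`. -/
def a1fun {n : ℕ} (ξ : Fin n → ℂ) (m : Fin n → ℕ) : ℂ → ℂ :=
  fun z => ∏ j, (z - ξ j) ^ (m j)

/-- A decomposition `f = a₁ g + q` with `g ∈ H²`, `deg q ≤ N − 1`, witnessing membership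
in `H(b) = a₁H² ⊕ P_{N−1}`. -/
def HbDecompOf {n : ℕ} (ξ : Fin n → ℂ) (m : Fin n → ℕ)
    (f g : ℂ → ℂ) (q : Polynomial ℂ) : Prop :=
  MemH2 g ∧ q.degree < ((∑ j, m j : ℕ) : WithBot ℕ) ∧
    ∀ z ∈ unitDisk, f z = a1fun ξ m z * g z + q.eval z

/-- Membership in `H(b) = a₁ H² ⊕ P_{N−1}` (description of `H(b)` for `b` rational,
not a finite Blaschke product, whose pythagorean mate has boundary zeros `ξ` with
multiplicities `m`). -/
def MemHb {n : ℕ} (ξ : Fin n → ℂ) (m : Fin n → ℕ) (f : ℂ → ℂ) : Prop :=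
  ∃ gq : (ℂ → ℂ) × Polynomial ℂ, HbDecompOf ξ m f gq.1 gq.2

/-- The (unique) decomposition of a member of `H(b)`. -/
def hbDecomp {n : ℕ} (ξ : Fin n → ℂ) (m : Fin n → ℕ) (f : ℂ → ℂ) :
    (ℂ → ℂ) × Polynomial ℂ :=
  if h : MemHb ξ m f then h.choose else (0, 0)

/-- The squared norm `⦀a₁g + q⦀² = ‖g‖²_{H²} + ‖q‖²_{H²}` on `H(b)`. -/
def hbNormSq {n : ℕ} (ξ : Fin n → ℂ) (m : Fin n → ℕ) (f : ℂ → ℂ) : ℝ :=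
  h2NormSq (hbDecomp ξ m f).1 + h2NormSq fun z => ((hbDecomp ξ m f).2).eval z

/-- The inner product on `H(b)` induced by the decomposition. -/
def hbInner {n : ℕ} (ξ : Fin n → ℂ) (m : Fin n → ℕ) (f g : ℂ → ℂ) : ℂ :=
  h2Inner (hbDecomp ξ m f).1 (hbDecomp ξ m g).1 +
    h2Inner (fun z => ((hbDecomp ξ m f).2).eval z)
      (fun z => ((hbDecomp ξ m g).2).eval z)

/-- The Stolz angle (non-tangential approach region) at a boundary point `ξ`. -/
def stolzAngle (ξ : ℂ) (M : ℝ) : Set ℂ := {z ∈ unitDisk | ‖z - ξ‖ ≤ M * (1 - ‖z‖)}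

/-- `f` has non-tangential limit `L` at `ξ`. -/
def NTLimit (f : ℂ → ℂ) (ξ L : ℂ) : Prop :=
  ∀ M : ℝ, 1 < M → Tendsto f (nhdsWithin ξ (stolzAngle ξ M)) (nhds L)

/-- Radial boundary value of `f` at `ζ` (junk value if the radial limit does not exist). -/
def bdryVal (f : ℂ → ℂ) (ζ : ℂ) : ℂ :=
  limUnder (nhdsWithin (1:ℝ) (Set.Iio 1)) fun r : ℝ => f ((r : ℂ) * ζ)

/-- The full setting: `b` is a rational function in the closed unit ball of `H^∞` with
`‖b‖_∞ = 1` which is not a finite Blaschke product; `a` is its pythagorean mate (rational,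
outer — i.e. zero-free on the disk —, `a(0) > 0`, `|a|² + |b|² = 1` on the circle); the
`ξ j` are the distinct zeros of `a` on the unit circle, with multiplicities `m j`. -/
structure RationalSetting (b a : ℂ → ℂ) (n : ℕ) (ξ : Fin n → ℂ) (m : Fin n → ℕ) :
    Prop where
  b_diff : DifferentiableOn ℂ b unitDisk
  b_rat : IsRationalOnDisk b
  b_le_one : ∀ z ∈ unitDisk, ‖b z‖ ≤ 1
  b_norm_one : sSup ((fun z => ‖b z‖) '' unitDisk) = 1
  b_not_fbp : ¬ IsFiniteBlaschke b
  a_diff : DifferentiableOn ℂ a unitDisk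
  a_rat : IsRationalOnDisk a
  a_outer : ∀ z ∈ unitDisk, a z ≠ 0
  a_zero_pos : 0 < (a 0).re ∧ (a 0).im = 0
  pyth : ∀ ζ ∈ unitCircle, ‖a ζ‖ ^ 2 + ‖b ζ‖ ^ 2 = 1
  zeros_mem : ∀ j, ξ j ∈ unitCircle
  zeros_inj : Function.Injective ξ
  mult_pos : ∀ j, 0 < m j
  factor : ∃ g : ℂ → ℂ, IsRationalOnDisk g ∧ (∀ ζ ∈ unitCircle, g ζ ≠ 0) ∧
    ∀ z ∈ Metric.closedBall (0:ℂ) 1, a z = a1fun ξ m z * g z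

/-- The composition operator `C_φ` maps `H(b)` into itself and is bounded there
(with respect to the equivalent norm `⦀·⦀_b`). -/
def CompBddHb {n : ℕ} (ξ : Fin n → ℂ) (m : Fin n → ℕ) (φ : ℂ → ℂ) : Prop :=
  (∀ f, MemHb ξ m f → MemHb ξ m fun z => f (φ z)) ∧
  ∃ C : ℝ, ∀ f, MemHb ξ m f →
    hbNormSq ξ m (fun z => f (φ z)) ≤ C * hbNormSq ξ m f

/-- The composition operator `C_φ` is compact on `H(b)`: it is bounded and the image of
every sequence in the unit ball has a subsequence whose image converges in `H(b)`. -/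
def CompCompactHb {n : ℕ} (ξ : Fin n → ℂ) (m : Fin n → ℕ) (φ : ℂ → ℂ) : Prop :=
  CompBddHb ξ m φ ∧
  ∀ f : ℕ → ℂ → ℂ, (∀ k, MemHb ξ m (f k) ∧ hbNormSq ξ m (f k) ≤ 1) →
    ∃ (κ : ℕ → ℕ) (g : ℂ → ℂ), StrictMono κ ∧ MemHb ξ m g ∧
      Tendsto (fun i => hbNormSq ξ m fun z => f (κ i) (φ z) - g z) atTop (nhds 0)

/-- The composition operator `C_φ` is Hilbert–Schmidt on `H(b)`: it is bounded and the sum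
of `⦀C_φ e⦀²` over the orthonormal basis `{a₁ z^k}ₖ ∪ {z^j}_{j<N}` of
`(H(b), ⦀·⦀_b)` is finite (the finite part of the sum being automatically finite). -/
def CompHSHb {n : ℕ} (ξ : Fin n → ℂ) (m : Fin n → ℕ) (φ : ℂ → ℂ) : Prop :=
  CompBddHb ξ m φ ∧
  Summable fun k : ℕ => hbNormSq ξ m fun z => a1fun ξ m (φ z) * φ z ^ k

/-- The weighted composition operator `W_{u,φ} f = u · (f ∘ φ)` maps `H²` boundedly
into itself. -/
def WCompBddH2 (u φ : ℂ → ℂ) : Prop :=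
  (∀ f, MemH2 f → MemH2 fun z => u z * f (φ z)) ∧
  ∃ C : ℝ, ∀ f, MemH2 f →
    h2NormSq (fun z => u z * f (φ z)) ≤ C * h2NormSq f

/-- The weighted composition operator `W_{u,φ}` is compact on `H²`. -/
def WCompCompactH2 (u φ : ℂ → ℂ) : Prop :=
  WCompBddH2 u φ ∧
  ∀ f : ℕ → ℂ → ℂ, (∀ k, MemH2 (f k) ∧ h2NormSq (f k) ≤ 1) →
    ∃ (κ : ℕ → ℕ) (g : ℂ → ℂ), StrictMono κ ∧ MemH2 g ∧
      Tendsto (fun i => h2NormSq fun z => u z * f (κ i) (φ z) - g z) atTop (nhds 0)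

/-- The weighted composition operator `W_{u,φ}` is Hilbert–Schmidt on `H²`
(sum over the orthonormal basis `{z^k}` of `H²`). -/
def WCompHSH2 (u φ : ℂ → ℂ) : Prop :=
  WCompBddH2 u φ ∧ Summable fun k : ℕ => h2NormSq fun z => u z * φ z ^ k

/-- The function `u = (a₁ ∘ φ) · ∏_{j ≥ p} (φ − φ(ξⱼ))^{mⱼ} / a₁`, where `Λ j = φ(ξ j)`
are the non-tangential limits of `φ` at the zeros of the mate. -/
def ufun {n : ℕ} (p : ℕ) (ξ : Fin n → ℂ) (m : Fin n → ℕ) (Λ : Fin n → ℂ)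
    (φ : ℂ → ℂ) : ℂ → ℂ :=
  fun z => a1fun ξ m (φ z) *
    (∏ j ∈ Finset.univ.filter fun j : Fin n => p ≤ (j : ℕ), (φ z - Λ j) ^ (m j)) /
      a1fun ξ m z

/-- The reproducing kernel of the de Branges–Rovnyak space `H(c)`:
`k_λ^c(z) = (1 − conj(c(λ)) c(z)) / (1 − conj(λ) z)`, as a function of the parameter `λ`
and the evaluation point `z`. -/
def rkKernel (c : ℂ → ℂ) (lam z : ℂ) : ℂ :=
  (1 - (starRingEnd ℂ) (c lam) * c z) / (1 - (starRingEnd ℂ) lam * z)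

/-- `f` belongs to the reproducing kernel Hilbert space `H(c)` with squared norm at
most `t`: for all finite linear combinations of kernels,
`|⟨f, Σ αᵢ k_{λᵢ}⟩|² ≤ t · ‖Σ αᵢ k_{λᵢ}‖²`. -/
def HbRKBound (c f : ℂ → ℂ) (t : ℝ) : Prop :=
  ∀ (k : ℕ) (lam α : Fin k → ℂ), (∀ i, lam i ∈ unitDisk) →
    ‖∑ i, (starRingEnd ℂ) (α i) * f (lam i)‖ ^ 2 ≤
      t * (∑ i, ∑ j, α i * (starRingEnd ℂ) (α j) * rkKernel c (lam i) (lam j)).re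

/-- Membership in the de Branges–Rovnyak space `H(c)` (general RKHS definition). -/
def MemHbRK (c f : ℂ → ℂ) : Prop := ∃ t : ℝ, HbRKBound c f t

/-- `φ` has an angular derivative in the sense of Carathéodory at `ξ`:
`φ` and `φ'` have non-tangential limits at `ξ` and `|φ(ξ)| = 1`. -/
def HasADC (φ : ℂ → ℂ) (ξ : ℂ) : Prop :=
  ∃ L L' : ℂ, ‖L‖ = 1 ∧ NTLimit φ ξ L ∧ NTLimit (deriv φ) ξ L'

/-- The measure `μ_{u,φ}(E) = ∫_{φ⁻¹(E) ∩ T} |u|² dm` (boundary values on the circle,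
normalized Lebesgue measure). -/
def muMeas (u φ : ℂ → ℂ) (E : Set ℂ) : ENNReal :=
  (ENNReal.ofReal (2 * Real.pi))⁻¹ *
    ∫⁻ θ in Set.Ioc (0:ℝ) (2 * Real.pi),
      (if bdryVal φ (Complex.exp (θ * Complex.I)) ∈ E then
        ENNReal.ofReal (‖bdryVal u (Complex.exp (θ * Complex.I))‖ ^ 2) else 0)

/-- `μ_{u,φ}` is a Carleson measure: `μ(S(ζ,r)) ≤ M r` for all Carleson windows
`S(ζ,r) = {z : |z| ≤ 1, |z − ζ| ≤ r}`, `ζ ∈ T`, `0 < r < 1`. -/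
def IsCarleson (u φ : ℂ → ℂ) : Prop :=
  ∃ M : ℝ, 0 < M ∧ ∀ ζ ∈ unitCircle, ∀ r ∈ Set.Ioo (0:ℝ) 1,
    muMeas u φ (Metric.closedBall ζ r ∩ Metric.closedBall 0 1) ≤ ENNReal.ofReal (M * r)

/-- `μ_{u,φ}` is a vanishing Carleson measure: `sup_{ζ∈T} μ(S(ζ,r))/r → 0` as `r → 0`. -/
def IsVanishingCarleson (u φ : ℂ → ℂ) : Prop :=
  ∀ ε > (0:ℝ), ∃ r₀ ∈ Set.Ioo (0:ℝ) 1, ∀ r ∈ Set.Ioo (0:ℝ) r₀, ∀ ζ ∈ unitCircle,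
    muMeas u φ (Metric.closedBall ζ r ∩ Metric.closedBall 0 1) ≤ ENNReal.ofReal (ε * r)

/-- The reproducing kernel integral
`∫_T (1 − |w|²) |u(ξ)|² / |1 − conj(w) φ(ξ)|² dm(ξ)`. -/
def repKerInt (u φ : ℂ → ℂ) (w : ℂ) : ENNReal :=
  (ENNReal.ofReal (2 * Real.pi))⁻¹ *
    ∫⁻ θ in Set.Ioc (0:ℝ) (2 * Real.pi),
      ENNReal.ofReal ((1 - ‖w‖ ^ 2) * ‖bdryVal u (Complex.exp (θ * Complex.I))‖ ^ 2 /
        ‖1 - (starRingEnd ℂ) w * bdryVal φ (Complex.exp (θ * Complex.I))‖ ^ 2)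

section Aux

lemma mem_unitDisk_iff {z : ℂ} : z ∈ unitDisk ↔ ‖z‖ < 1 := by
  simp [unitDisk, Metric.mem_ball, dist_zero_right]

lemma taylor_hasSum {f : ℂ → ℂ} (hf : DifferentiableOn ℂ f unitDisk) {z : ℂ}
    (hz : z ∈ unitDisk) : HasSum (fun k => taylorCoeff f k * z ^ k) (f z) := by
  rw [mem_unitDisk_iff] at hz
  set r : ℝ := (1 + ‖z‖) / 2 with hr
  have hn := norm_nonneg z
  have hr0 : 0 < r := by positivity
  have hrlt : r < 1 := by rw [hr]; linarith
  have hzr : ‖z‖ < r := by rw [hr]; linarith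
  set Rn : NNReal := ⟨r, hr0.le⟩ with hRn
  have hsub : Metric.closedBall (0:ℂ) Rn ⊆ unitDisk := by
    rw [unitDisk]
    exact Metric.closedBall_subset_ball (by rw [hRn]; exact_mod_cast hrlt)
  have hps := (hf.mono hsub).hasFPowerSeriesOnBall (R := Rn) (by rw [hRn]; exact_mod_cast hr0)
  have hmem : z ∈ Metric.eball (0:ℂ) (Rn : ENNReal) := by
    rw [Metric.emetric_ball_nnreal]
    have : (Rn : ℝ) = r := rfl
    simp only [Metric.mem_ball, dist_zero_right, this]
    exact hzr
  have h := hps.hasSum_iteratedFDeriv hmem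
  rw [zero_add] at h
  have heq : (fun k => taylorCoeff f k * z ^ k)
      = fun k => ((k.factorial : ℂ))⁻¹ • iteratedFDeriv ℂ k f 0 (fun _ => z) := by
    funext k
    have hfac : ((k.factorial : ℕ) : ℂ) ≠ 0 := Nat.cast_ne_zero.mpr k.factorial_ne_zero
    rw [iteratedFDeriv_apply_eq_iteratedDeriv_mul_prod]
    simp only [taylorCoeff, Finset.prod_const, Finset.card_univ, Fintype.card_fin,
      smul_eq_mul]
    field_simp
  rw [heq]
  exact h

lemma iteratedDeriv_polyeval (k : ℕ) (p : Polynomial ℂ) :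
    iteratedDeriv k (fun z => p.eval z) = fun z => (Polynomial.derivative^[k] p).eval z := by
  induction k generalizing p with
  | zero => simp
  | succ k ih =>
    rw [iteratedDeriv_succ']
    have hd : deriv (fun z => p.eval z) = fun z => (Polynomial.derivative p).eval z := by
      funext z
      exact Polynomial.deriv (p := p) (x := z)
    rw [hd, ih, Function.iterate_succ_apply]

lemma taylorCoeff_polyeval (p : Polynomial ℂ) (k : ℕ) :
    taylorCoeff (fun z => p.eval z) k = p.coeff k := by
  have hfac : ((k.factorial : ℕ) : ℂ) ≠ 0 := Nat.cast_ne_zero.mpr k.factorial_ne_zero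
  rw [taylorCoeff, iteratedDeriv_polyeval]
  show Polynomial.eval 0 ((⇑Polynomial.derivative)^[k] p) / (k.factorial : ℂ) = p.coeff k
  rw [← Polynomial.coeff_zero_eq_eval_zero, Polynomial.coeff_iterate_derivative]
  simp only [zero_add, Nat.descFactorial_self, nsmul_eq_mul]
  exact mul_div_cancel_left₀ _ hfac

lemma memH2_polyeval (p : Polynomial ℂ) : MemH2 (fun z => p.eval z) := by
  refine ⟨p.differentiable.differentiableOn, ?_⟩
  apply summable_of_ne_finset_zero (s := Finset.range (p.natDegree + 1))
  intro k hk
  have hk' : p.natDegree < k := by simp [Finset.mem_range] at hk; omega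
  rw [taylorCoeff_polyeval, Polynomial.coeff_eq_zero_of_natDegree_lt hk', norm_zero]
  norm_num

lemma h2NormSq_nonneg (f : ℂ → ℂ) : 0 ≤ h2NormSq f := tsum_nonneg fun k => sq_nonneg _

lemma taylorCoeff_congr {f g : ℂ → ℂ} (h : ∀ z ∈ unitDisk, f z = g z) (k : ℕ) :
    taylorCoeff f k = taylorCoeff g k := by
  have hmem : unitDisk ∈ nhds (0:ℂ) := by
    rw [unitDisk]; exact Metric.ball_mem_nhds 0 one_pos
  have hev : f =ᶠ[nhds (0:ℂ)] g := by
    filter_upwards [hmem] with z hz using h z hz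
  rw [taylorCoeff, taylorCoeff, hev.iteratedDeriv_eq k]

lemma h2NormSq_congr {f g : ℂ → ℂ} (h : ∀ z ∈ unitDisk, f z = g z) :
    h2NormSq f = h2NormSq g := by
  unfold h2NormSq
  congr 1
  funext k
  rw [taylorCoeff_congr h]

lemma const_eq_polyeval (d : ℂ) :
    (fun _ : ℂ => d) = (fun z => (Polynomial.C d).eval z) := by
  funext z; simp

lemma memH2_const (d : ℂ) : MemH2 (fun _ : ℂ => d) := by
  rw [const_eq_polyeval]; exact memH2_polyeval _

lemma h2NormSq_const (d : ℂ) : h2NormSq (fun _ : ℂ => d) = ‖d‖ ^ 2 := by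
  rw [const_eq_polyeval, h2NormSq]
  rw [tsum_eq_single 0 ?_]
  · rw [taylorCoeff_polyeval]; simp
  · intro k hk
    rw [taylorCoeff_polyeval, Polynomial.coeff_C, if_neg hk]
    norm_num

end Aux
section Aux2

lemma h2_growth {g : ℂ → ℂ} (hg : MemH2 g) {z : ℂ} (hz : z ∈ unitDisk) :
    ‖g z‖ ^ 2 * (1 - ‖z‖ ^ 2) ≤ h2NormSq g := by
  obtain ⟨hgd, hgs⟩ := hg
  have hz1 : ‖z‖ < 1 := mem_unitDisk_iff.mp hz
  have hr0 : 0 ≤ ‖z‖ := norm_nonneg z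
  set S := h2NormSq g with hS
  have hS0 : 0 ≤ S := h2NormSq_nonneg g
  have hr2 : ‖z‖ ^ 2 < 1 := by nlinarith
  have hr20 : 0 ≤ ‖z‖ ^ 2 := sq_nonneg _
  have h1pos : 0 < 1 - ‖z‖ ^ 2 := by linarith
  set T : ℝ := (1 - ‖z‖ ^ 2)⁻¹ with hT
  have hT0 : 0 ≤ T := by positivity
  have hgeo : Summable (fun k : ℕ => (‖z‖ ^ 2) ^ k) := summable_geometric_of_lt_one hr20 hr2
  have hgeo_t : ∑' k : ℕ, (‖z‖ ^ 2) ^ k = T := tsum_geometric_of_lt_one hr20 hr2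
  have key : ∀ n : ℕ, ∑ k ∈ Finset.range n, ‖taylorCoeff g k‖ * ‖z‖ ^ k
      ≤ Real.sqrt (S * T) := by
    intro n
    have cs := Finset.sum_mul_sq_le_sq_mul_sq (Finset.range n)
      (fun k => ‖taylorCoeff g k‖) (fun k => ‖z‖ ^ k)
    have h1 : ∑ k ∈ Finset.range n, ‖taylorCoeff g k‖ ^ 2 ≤ S :=
      Summable.sum_le_tsum _ (fun k _ => sq_nonneg _) hgs
    have h2 : ∑ k ∈ Finset.range n, (‖z‖ ^ k) ^ 2 ≤ T := by
      have he : ∀ k ∈ Finset.range n, (‖z‖ ^ k) ^ 2 = (‖z‖ ^ 2) ^ k := fun k _ => by ring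
      rw [Finset.sum_congr rfl he]
      calc ∑ k ∈ Finset.range n, (‖z‖ ^ 2) ^ k ≤ ∑' k : ℕ, (‖z‖ ^ 2) ^ k :=
            Summable.sum_le_tsum _ (fun k _ => by positivity) hgeo
        _ = T := hgeo_t
    have hnn : 0 ≤ ∑ k ∈ Finset.range n, ‖taylorCoeff g k‖ * ‖z‖ ^ k :=
      Finset.sum_nonneg fun k _ => by positivity
    have hsq : (∑ k ∈ Finset.range n, ‖taylorCoeff g k‖ * ‖z‖ ^ k) ^ 2 ≤ S * T :=
      le_trans cs (mul_le_mul h1 h2 (Finset.sum_nonneg fun k _ => sq_nonneg _) hS0)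
    have := Real.sqrt_le_sqrt hsq
    rwa [Real.sqrt_sq hnn] at this
  have hsummable : Summable (fun k => ‖taylorCoeff g k‖ * ‖z‖ ^ k) :=
    summable_of_sum_range_le (fun k => by positivity) key
  have hnormeq : ∀ k, ‖taylorCoeff g k * z ^ k‖ = ‖taylorCoeff g k‖ * ‖z‖ ^ k := fun k => by
    rw [norm_mul, norm_pow]
  have hnorm : ‖g z‖ ≤ ∑' k, ‖taylorCoeff g k‖ * ‖z‖ ^ k := by
    have hs := taylor_hasSum hgd hz
    rw [← hs.tsum_eq]
    calc ‖∑' k, taylorCoeff g k * z ^ k‖ ≤ ∑' k, ‖taylorCoeff g k * z ^ k‖ :=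
        norm_tsum_le_tsum_norm (by simpa only [hnormeq] using hsummable)
      _ = ∑' k, ‖taylorCoeff g k‖ * ‖z‖ ^ k := tsum_congr hnormeq
  have htsum : ∑' k, ‖taylorCoeff g k‖ * ‖z‖ ^ k ≤ Real.sqrt (S * T) :=
    Real.tsum_le_of_sum_range_le (fun k => by positivity) key
  have hb : ‖g z‖ ≤ Real.sqrt (S * T) := le_trans hnorm htsum
  have hb2 : ‖g z‖ ^ 2 ≤ S * T := by
    have h2 := pow_le_pow_left₀ (norm_nonneg _) hb 2
    rwa [Real.sq_sqrt (mul_nonneg hS0 hT0)] at h2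
  calc ‖g z‖ ^ 2 * (1 - ‖z‖ ^ 2) ≤ (S * T) * (1 - ‖z‖ ^ 2) :=
      mul_le_mul_of_nonneg_right hb2 h1pos.le
    _ = S := by rw [hT, mul_assoc, inv_mul_cancel₀ h1pos.ne', mul_one]

lemma ntlimit_decomp {g : ℂ → ℂ} (hg : MemH2 g) (e : ℂ) {F : ℂ → ℂ}
    (hF : ∀ z ∈ unitDisk, F z = (z - 1) * g z + e) : NTLimit F 1 e := by
  intro M hM
  have hM0 : 0 < M := lt_trans one_pos hM
  rw [Metric.tendsto_nhdsWithin_nhds]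
  intro ε hε
  set S := h2NormSq g with hS
  have hS0 : 0 ≤ S := h2NormSq_nonneg g
  refine ⟨ε ^ 2 / (M * (S + 1)), by positivity, ?_⟩
  intro z hz hd
  obtain ⟨hzD, hzM⟩ := hz
  have hz1 : ‖z‖ < 1 := mem_unitDisk_iff.mp hzD
  rw [dist_eq_norm] at hd ⊢
  rw [hF z hzD]
  have hre : (z - 1) * g z + e - e = (z - 1) * g z := by ring
  rw [hre, norm_mul]
  have hgrow : ‖g z‖ ^ 2 * (1 - ‖z‖ ^ 2) ≤ S := h2_growth hg hzD
  have hx0 : 0 ≤ ‖z - 1‖ := norm_nonneg _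
  have hy2 : 0 ≤ ‖g z‖ ^ 2 := sq_nonneg _
  have hz0 : 0 ≤ ‖z‖ := norm_nonneg z
  have h3 : ‖g z‖ ^ 2 * (1 - ‖z‖) ≤ S := by nlinarith [mul_nonneg (mul_nonneg hy2 hz0) (by linarith : (0:ℝ) ≤ 1 - ‖z‖)]
  have hq : (‖z - 1‖ * ‖g z‖) ^ 2 ≤ M * (S + 1) * ‖z - 1‖ := by
    calc (‖z - 1‖ * ‖g z‖) ^ 2 = ‖z - 1‖ * (‖z - 1‖ * ‖g z‖ ^ 2) := by ring
      _ ≤ ‖z - 1‖ * (M * (1 - ‖z‖) * ‖g z‖ ^ 2) :=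
          mul_le_mul_of_nonneg_left (mul_le_mul_of_nonneg_right hzM hy2) hx0
      _ = ‖z - 1‖ * (M * (‖g z‖ ^ 2 * (1 - ‖z‖))) := by ring
      _ ≤ ‖z - 1‖ * (M * S) :=
          mul_le_mul_of_nonneg_left (mul_le_mul_of_nonneg_left h3 hM0.le) hx0
      _ ≤ M * (S + 1) * ‖z - 1‖ := by nlinarith [mul_nonneg hM0.le hx0]
  have hlt : M * (S + 1) * ‖z - 1‖ < ε ^ 2 := by
    have := (lt_div_iff₀ (by positivity : (0:ℝ) < M * (S + 1))).mp hd
    linarith [this]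
  have hfin : (‖z - 1‖ * ‖g z‖) ^ 2 < ε ^ 2 := lt_of_le_of_lt hq hlt
  exact lt_of_pow_lt_pow_left₀ 2 hε.le hfin

lemma stolz_mem_closure : (1:ℂ) ∈ closure (stolzAngle 1 2) := by
  rw [Metric.mem_closure_iff]
  intro ε hε
  have hm : 0 < min ε 1 := lt_min hε one_pos
  set t : ℝ := min ε 1 / 2 with ht
  have ht0 : 0 < t := by rw [ht]; linarith
  have ht1 : t ≤ 1 / 2 := by rw [ht]; have := min_le_right ε 1; linarith
  have htε : t < ε := by rw [ht]; have := min_le_left ε 1; linarith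
  refine ⟨((1 - t : ℝ) : ℂ), ⟨?_, ?_⟩, ?_⟩
  · rw [mem_unitDisk_iff, Complex.norm_real, Real.norm_eq_abs,
      _root_.abs_of_nonneg (by linarith)]
    linarith
  · have h1 : ((1 - t : ℝ) : ℂ) - 1 = ((-t : ℝ) : ℂ) := by push_cast; ring
    rw [h1, Complex.norm_real, Real.norm_eq_abs, abs_neg, _root_.abs_of_nonneg ht0.le,
      Complex.norm_real, Real.norm_eq_abs, _root_.abs_of_nonneg (by linarith)]
    linarith
  · rw [dist_eq_norm]
    have h1 : (1 : ℂ) - ((1 - t : ℝ) : ℂ) = ((t : ℝ) : ℂ) := by push_cast; ring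
    rw [h1, Complex.norm_real, Real.norm_eq_abs, _root_.abs_of_nonneg ht0.le]
    exact htε

lemma stolz_neBot : (nhdsWithin (1:ℂ) (stolzAngle 1 2)).NeBot :=
  mem_closure_iff_nhdsWithin_neBot.mp stolz_mem_closure

lemma ntlimit_unique {f : ℂ → ℂ} {L L' : ℂ} (h : NTLimit f 1 L) (h' : NTLimit f 1 L') :
    L = L' := by
  haveI := stolz_neBot
  exact tendsto_nhds_unique (h 2 one_lt_two) (h' 2 one_lt_two)

end Aux2
section Aux3

lemma a1_eq (z : ℂ) : a1fun (fun _ : Fin 1 => (1:ℂ)) (fun _ => 1) z = z - 1 := by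
  simp [a1fun]

lemma decomp_q_eq {q : Polynomial ℂ}
    (h : q.degree < ((∑ j : Fin 1, (fun _ => (1:ℕ)) j : ℕ) : WithBot ℕ)) :
    q = Polynomial.C (q.coeff 0) := by
  apply Polynomial.eq_C_of_degree_le_zero
  have h' : q.degree < 1 := by simpa using h
  exact Nat.WithBot.lt_one_iff_le_zero.mp h'

lemma ntlimit_of_decomp {F g : ℂ → ℂ} {q : Polynomial ℂ}
    (h : HbDecompOf (fun _ : Fin 1 => (1:ℂ)) (fun _ => 1) F g q) :
    NTLimit F 1 (q.coeff 0) := by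
  obtain ⟨hg, hdeg, hrep⟩ := h
  have hq := decomp_q_eq hdeg
  apply ntlimit_decomp hg
  intro z hz
  rw [hrep z hz, a1_eq]
  congr 1
  conv_lhs => rw [hq]
  exact Polynomial.eval_C

lemma hbNormSq_eq {F g : ℂ → ℂ} {q : Polynomial ℂ}
    (h : HbDecompOf (fun _ : Fin 1 => (1:ℂ)) (fun _ => 1) F g q) :
    hbNormSq (fun _ : Fin 1 => (1:ℂ)) (fun _ => 1) F
      = h2NormSq g + h2NormSq (fun z => q.eval z) := by
  have hMem : MemHb (fun _ : Fin 1 => (1:ℂ)) (fun _ => 1) F := ⟨(g, q), h⟩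
  have hspec := hMem.choose_spec
  obtain ⟨hg, hdeg, hrep⟩ := h
  have h1 := ntlimit_of_decomp hspec
  have h2 := ntlimit_of_decomp (⟨hg, hdeg, hrep⟩ :
    HbDecompOf (fun _ : Fin 1 => (1:ℂ)) (fun _ => 1) F g q)
  have hc : hMem.choose.2.coeff 0 = q.coeff 0 := ntlimit_unique h1 h2
  have hqq : hMem.choose.2 = q := by
    rw [decomp_q_eq hspec.2.1, decomp_q_eq hdeg, hc]
  have hgg : ∀ z ∈ unitDisk, hMem.choose.1 z = g z := by
    intro z hz
    have hzne : z - 1 ≠ 0 := by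
      rw [sub_ne_zero]
      intro hzz
      rw [mem_unitDisk_iff, hzz, norm_one] at hz
      exact lt_irrefl _ hz
    have e1 := hspec.2.2 z hz
    have e2 := hrep z hz
    rw [a1_eq] at e1 e2
    rw [hqq] at e1
    have : (z - 1) * hMem.choose.1 z = (z - 1) * g z := by
      rw [e1] at e2
      linear_combination e2
    exact mul_left_cancel₀ hzne this
  unfold hbNormSq hbDecomp
  rw [dif_pos hMem]
  rw [h2NormSq_congr hgg, hqq]

lemma gpoly_coeff (c : ℂ) (N j : ℕ) :
    (∑ k ∈ Finset.range N, Polynomial.C ((starRingEnd ℂ) c ^ k) * Polynomial.X ^ k).coeff j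
      = if j < N then (starRingEnd ℂ) c ^ j else 0 := by
  rw [Polynomial.finset_sum_coeff]
  simp only [Polynomial.coeff_C_mul, Polynomial.coeff_X_pow, mul_ite, mul_one, mul_zero]
  rw [Finset.sum_ite_eq (Finset.range N) j fun k => (starRingEnd ℂ) c ^ k]
  simp [Finset.mem_range]

lemma h2NormSq_gpoly {c : ℂ} (hc : ‖c‖ = 1) (N : ℕ) :
    h2NormSq (fun z =>
      (∑ k ∈ Finset.range N, Polynomial.C ((starRingEnd ℂ) c ^ k) * Polynomial.X ^ k).eval z)
      = N := by
  rw [h2NormSq]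
  rw [tsum_eq_sum (s := Finset.range N) ?_]
  · have he : ∀ k ∈ Finset.range N,
        ‖taylorCoeff (fun z => (∑ k ∈ Finset.range N,
          Polynomial.C ((starRingEnd ℂ) c ^ k) * Polynomial.X ^ k).eval z) k‖ ^ 2 = 1 := by
      intro k hk
      rw [taylorCoeff_polyeval, gpoly_coeff, if_pos (Finset.mem_range.mp hk), norm_pow,
        RCLike.norm_conj, hc, one_pow]
      norm_num
    rw [Finset.sum_congr rfl he, Finset.sum_const, Finset.card_range, nsmul_eq_mul, mul_one]
  · intro k hk
    rw [taylorCoeff_polyeval, gpoly_coeff, if_neg (by simpa [Finset.mem_range] using hk)]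
    norm_num

lemma gpoly_eval {c : ℂ} (hc : ‖c‖ = 1) (N : ℕ) :
    (∑ k ∈ Finset.range N, Polynomial.C ((starRingEnd ℂ) c ^ k) * Polynomial.X ^ k).eval c
      = (N : ℂ) := by
  rw [Polynomial.eval_finset_sum]
  have hcc : (starRingEnd ℂ) c * c = 1 := by
    rw [mul_comm, Complex.mul_conj]
    rw [Complex.normSq_eq_norm_sq, hc]
    norm_num
  have he : ∀ k ∈ Finset.range N,
      (Polynomial.C ((starRingEnd ℂ) c ^ k) * Polynomial.X ^ k).eval c = 1 := by
    intro k _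
    rw [Polynomial.eval_mul, Polynomial.eval_C, Polynomial.eval_pow, Polynomial.eval_X,
      ← mul_pow, hcc, one_pow]
  rw [Finset.sum_congr rfl he, Finset.sum_const, Finset.card_range, nsmul_eq_mul, mul_one]

end Aux3
/-- Corollary 3.6. For `b(z) = (1+z)/2` (so that `a₁(z) = z − 1`, i.e.
one boundary zero `ξ = 1` of multiplicity `1`), if `C_φ` is bounded on `H(b)` then the
non-tangential limit `φ(1)` is in `D` or equal to `1`. -/
theorem sarason_silva_boundary
    (b : ℂ → ℂ) (hb : b = fun z => (1 + z) / 2)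
    (φ : ℂ → ℂ) (hφd : DifferentiableOn ℂ φ unitDisk)
    (hφmap : ∀ z ∈ unitDisk, φ z ∈ unitDisk)
    (hbdd : CompBddHb (fun _ : Fin 1 => (1:ℂ)) (fun _ => 1) φ) :
    ∃ L, NTLimit φ 1 L ∧ (L ∈ unitDisk ∨ L = 1) := by
  obtain ⟨hmap, C, hC⟩ := hbdd
  have hid : MemHb (fun _ : Fin 1 => (1:ℂ)) (fun _ => 1) (fun z : ℂ => z) := by
    refine ⟨⟨fun _ => (1:ℂ), Polynomial.C 1⟩, memH2_const 1, ?_, ?_⟩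
    · refine lt_of_le_of_lt Polynomial.degree_C_le ?_
      simp
    · intro z hz
      rw [a1_eq, Polynomial.eval_C]
      ring
  have hφmem := hmap _ hid
  obtain ⟨⟨g, q⟩, hdec⟩ := hφmem
  have hNTφ : NTLimit φ 1 (q.coeff 0) := ntlimit_of_decomp hdec
  set c := q.coeff 0 with hcdef
  by_cases hlt : ‖c‖ < 1
  · exact ⟨c, hNTφ, Or.inl (mem_unitDisk_iff.mpr hlt)⟩
  · have hle : ‖c‖ ≤ 1 := by
      haveI := stolz_neBot
      have ht := (hNTφ 2 one_lt_two).norm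
      apply le_of_tendsto ht
      filter_upwards [self_mem_nhdsWithin] with z hz
      exact (mem_unitDisk_iff.mp (hφmap z hz.1)).le
    have hcn : ‖c‖ = 1 := le_antisymm hle (not_lt.mp hlt)
    have key : ∀ N : ℕ, ‖c - 1‖ ^ 2 * (N:ℝ) ^ 2 ≤ C * N := by
      intro N
      set P : Polynomial ℂ :=
        ∑ k ∈ Finset.range N, Polynomial.C ((starRingEnd ℂ) c ^ k) * Polynomial.X ^ k with hP
      set fN : ℂ → ℂ := fun z => (z - 1) * P.eval z with hfN
      have hfNdec : HbDecompOf (fun _ : Fin 1 => (1:ℂ)) (fun _ => 1) fN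
          (fun z => P.eval z) 0 := by
        refine ⟨memH2_polyeval P, ?_, ?_⟩
        · rw [Polynomial.degree_zero]
          rw [Fin.sum_univ_one, Nat.cast_one]
          exact_mod_cast WithBot.bot_lt_coe 1
        · intro z hz
          rw [a1_eq]
          simp [hfN]
      have hfNmem : MemHb (fun _ : Fin 1 => (1:ℂ)) (fun _ => 1) fN := ⟨⟨_, _⟩, hfNdec⟩
      have hfNnorm : hbNormSq (fun _ : Fin 1 => (1:ℂ)) (fun _ => 1) fN = N := by
        rw [hbNormSq_eq hfNdec, h2NormSq_gpoly hcn]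
        have h0 : h2NormSq (fun z : ℂ => (0 : Polynomial ℂ).eval z) = 0 := by
          have he : (fun z : ℂ => (0 : Polynomial ℂ).eval z) = fun _ => (0:ℂ) := by
            funext z; simp
          rw [he, h2NormSq_const]
          simp
        rw [h0, add_zero]
      obtain ⟨⟨g2, s⟩, hcdec⟩ := hmap fN hfNmem
      have hNT1 : NTLimit (fun z => fN (φ z)) 1 (s.coeff 0) := ntlimit_of_decomp hcdec
      have hNT2 : NTLimit (fun z => fN (φ z)) 1 ((c - 1) * N) := by
        have hcont : Continuous fN := by
          rw [hfN]
          exact (continuous_id.sub continuous_const).mul P.continuous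
        have hval : fN c = (c - 1) * N := by
          show (c - 1) * Polynomial.eval c P = _
          rw [hP, gpoly_eval hcn]
        intro M hM
        have hco := (hcont.tendsto c).comp (hNTφ M hM)
        rw [hval] at hco
        exact hco
      have hs : s.coeff 0 = (c - 1) * N := ntlimit_unique hNT1 hNT2
      have hlow : ‖(c - 1) * (N:ℂ)‖ ^ 2
          ≤ hbNormSq (fun _ : Fin 1 => (1:ℂ)) (fun _ => 1) (fun z => fN (φ z)) := by
        rw [hbNormSq_eq hcdec]
        have hsC : s = Polynomial.C (s.coeff 0) := decomp_q_eq hcdec.2.1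
        have hse : h2NormSq (fun z : ℂ => s.eval z) = ‖s.coeff 0‖ ^ 2 := by
          have he : (fun z : ℂ => s.eval z) = fun _ => s.coeff 0 := by
            funext z
            conv_lhs => rw [hsC]
            exact Polynomial.eval_C
          rw [he, h2NormSq_const]
        rw [hse, hs]
        linarith [h2NormSq_nonneg g2]
      have hup := hC fN hfNmem
      rw [hfNnorm] at hup
      have hnval : ‖(c - 1) * (N:ℂ)‖ ^ 2 = ‖c - 1‖ ^ 2 * (N:ℝ) ^ 2 := by
        rw [norm_mul, mul_pow, Complex.norm_natCast]
      rw [hnval] at hlow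
      exact le_trans hlow hup
    have hc1 : c = 1 := by
      by_contra hne
      have hpos : 0 < ‖c - 1‖ ^ 2 := by
        have h0 : c - 1 ≠ 0 := sub_ne_zero.mpr hne
        have := norm_pos_iff.mpr h0
        positivity
      obtain ⟨N, hN⟩ := exists_nat_gt (max (C / ‖c - 1‖ ^ 2) 0)
      have hN0 : 0 < (N:ℝ) := lt_of_le_of_lt (le_max_right _ _) hN
      have h1 : C / ‖c - 1‖ ^ 2 < N := lt_of_le_of_lt (le_max_left _ _) hN
      have h2 : C < N * ‖c - 1‖ ^ 2 := (div_lt_iff₀ hpos).mp h1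
      have h3 := key N
      nlinarith [mul_lt_mul_of_pos_right h2 hN0]
    exact ⟨c, hNTφ, Or.inr hc1⟩

end
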